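/- Let Λ = ⊕_{g∈G} Λ_g be a strongly G-graded ring with identity component Δ. Then for every g ∈ G, the subset {h ∈ G : Λ_h ≅ Δ as Δ-bimodules} is a subgroup of G. -/

import Mathlib

open Pointwise
/-- A strong grading of the ring `Λ` by the group `G`: `Λ` is the internal direct
sum of the additive subgroups `A g`, and `A g * A h = A (g * h)` for all `g, h`. -/
structure IsStrongGrading {G Λ : Type*} [Group G] [Ring Λ] [DecidableEq G]
    (A : G → AddSubgroup Λ) : Prop where
  internal : DirectSum.IsInternal A
  one_mem : (1 : Λ) ∈ A 1
  mul_mem : ∀ (g h : G), ∀ a ∈ A g, ∀ b ∈ A h, a * b ∈ A (g * h)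
  strong : ∀ g h : G, A (g * h) ≤ AddSubgroup.closure ((A g : Set Λ) * (A h : Set Λ))

/-- `Λ_g ≅ Λ_h` as `Δ`-bimodules (`Δ = Λ_1`): an additive equivalence compatible
with left and right multiplication by elements of the identity component. -/
def ComponentBimodIso {G Λ : Type*} [Group G] [Ring Λ]
    (A : G → AddSubgroup Λ) (g h : G) : Prop :=
  ∃ f : A g ≃+ A h,
    (∀ d ∈ A (1 : G), ∀ x y : A g, (y : Λ) = d * (x : Λ) → ((f y : Λ) = d * (f x : Λ))) ∧
    (∀ d ∈ A (1 : G), ∀ x y : A g, (y : Λ) = (x : Λ) * d → ((f y : Λ) = (f x : Λ) * d))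

section Aux

variable {G Λ : Type*} [Group G] [Ring Λ] [DecidableEq G]

/-- `Λ_h` contains an invertible element commuting with `Δ`, with inverse in `Λ_{h⁻¹}`. -/
def InvElem (A : G → AddSubgroup Λ) (h : G) : Prop :=
  ∃ u ∈ A h, ∃ v ∈ A h⁻¹, u * v = 1 ∧ v * u = 1 ∧ ∀ d ∈ A (1 : G), u * d = d * u

lemma invElem_comm_v {A : G → AddSubgroup Λ} {u v : Λ}
    (huv : u * v = 1) (hvu : v * u = 1)
    (hc : ∀ d ∈ A (1 : G), u * d = d * u) : ∀ d ∈ A (1 : G), v * d = d * v := by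
  intro d hd
  have : v * d = v * d * (u * v) := by rw [huv, mul_one]
  calc v * d = v * (d * u) * v := by rw [this]; noncomm_ring
    _ = v * (u * d) * v := by rw [hc d hd]
    _ = d * v := by rw [← mul_assoc, hvu, one_mul]

lemma invElem_iff (A : G → AddSubgroup Λ) (hA : IsStrongGrading A) (h : G) :
    InvElem A h ↔ ComponentBimodIso A h 1 := by
  constructor
  · rintro ⟨u, hu, v, hv, huv, hvu, hc⟩
    have hvc := invElem_comm_v (A := A) huv hvu hc
    have memF : ∀ x : A h, (x : Λ) * v ∈ A 1 := by
      intro x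
      have := hA.mul_mem h h⁻¹ x x.2 v hv
      simpa using this
    have memI : ∀ y : A 1, (y : Λ) * u ∈ A h := by
      intro y
      have := hA.mul_mem 1 h y y.2 u hu
      simpa using this
    refine ⟨{ toFun := fun x => ⟨(x : Λ) * v, memF x⟩
              invFun := fun y => ⟨(y : Λ) * u, memI y⟩
              left_inv := ?_
              right_inv := ?_
              map_add' := ?_ }, ?_, ?_⟩
    · intro x; ext; simp [mul_assoc, hvu]
    · intro y; ext; simp [mul_assoc, huv]
    · intro x y; ext; simp [add_mul]
    · intro d hd x y hxy
      simp only [AddEquiv.coe_mk, Equiv.coe_fn_mk]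
      rw [hxy, mul_assoc]
    · intro d hd x y hxy
      simp only [AddEquiv.coe_mk, Equiv.coe_fn_mk]
      rw [hxy, mul_assoc, ← hvc d hd, ← mul_assoc]
  · rintro ⟨f, hl, hr⟩
    set u : Λ := (f.symm ⟨1, hA.one_mem⟩ : Λ) with hu_def
    have hu : u ∈ A h := (f.symm ⟨1, hA.one_mem⟩).2
    have hfu : (f ⟨u, hu⟩ : Λ) = 1 := by
      have : f ⟨u, hu⟩ = ⟨1, hA.one_mem⟩ := f.apply_symm_apply _
      exact congrArg Subtype.val this
    -- u commutes with Δ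
    have hc : ∀ d ∈ A (1 : G), u * d = d * u := by
      intro d hd
      have h1 : d * u ∈ A h := by simpa using hA.mul_mem 1 h d hd u hu
      have h2 : u * d ∈ A h := by simpa using hA.mul_mem h 1 u hu d hd
      have e1 : (f ⟨d * u, h1⟩ : Λ) = d * (f ⟨u, hu⟩ : Λ) := hl d hd ⟨u, hu⟩ ⟨d * u, h1⟩ rfl
      have e2 : (f ⟨u * d, h2⟩ : Λ) = (f ⟨u, hu⟩ : Λ) * d := hr d hd ⟨u, hu⟩ ⟨u * d, h2⟩ rfl
      have : f ⟨u * d, h2⟩ = f ⟨d * u, h1⟩ := by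
        ext; rw [e1, e2, hfu, one_mul, mul_one]
      have := f.injective this
      exact congrArg Subtype.val this
    -- every a ∈ A h factors as f(a) * u and u * f(a)
    have key_l : ∀ a : A h, (a : Λ) = (f a : Λ) * u := by
      intro a
      have hmem : (f a : Λ) * u ∈ A h := by
        simpa using hA.mul_mem 1 h (f a) (f a).2 u hu
      have e : (f ⟨(f a : Λ) * u, hmem⟩ : Λ) = (f a : Λ) * (f ⟨u, hu⟩ : Λ) :=
        hl (f a) (f a).2 ⟨u, hu⟩ ⟨(f a : Λ) * u, hmem⟩ rfl
      have : f ⟨(f a : Λ) * u, hmem⟩ = f a := by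
        ext; rw [e, hfu, mul_one]
      have := f.injective this
      exact (congrArg Subtype.val this).symm
    have key_r : ∀ a : A h, (a : Λ) = u * (f a : Λ) := by
      intro a
      have hmem : u * (f a : Λ) ∈ A h := by
        simpa using hA.mul_mem h 1 u hu (f a) (f a).2
      have e : (f ⟨u * (f a : Λ), hmem⟩ : Λ) = (f ⟨u, hu⟩ : Λ) * (f a : Λ) :=
        hr (f a) (f a).2 ⟨u, hu⟩ ⟨u * (f a : Λ), hmem⟩ rfl
      have : f ⟨u * (f a : Λ), hmem⟩ = f a := by
        ext; rw [e, hfu, one_mul]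
      have := f.injective this
      exact (congrArg Subtype.val this).symm
    -- left inverse
    have hleft : ∃ w ∈ A h⁻¹, w * u = 1 := by
      set T : AddSubgroup Λ :=
        { carrier := {x | ∃ w ∈ A h⁻¹, w * u = x}
          zero_mem' := ⟨0, (A h⁻¹).zero_mem, by simp⟩
          add_mem' := by
            rintro a b ⟨w1, hw1, rfl⟩ ⟨w2, hw2, rfl⟩
            exact ⟨w1 + w2, (A h⁻¹).add_mem hw1 hw2, by noncomm_ring⟩
          neg_mem' := by
            rintro a ⟨w1, hw1, rfl⟩
            exact ⟨-w1, (A h⁻¹).neg_mem hw1, by noncomm_ring⟩ }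
      have hsub : ((A h⁻¹ : Set Λ) * (A h : Set Λ)) ⊆ (T : Set Λ) := by
        rintro x hx
        rw [Set.mem_mul] at hx
        obtain ⟨b, hb, a, ha, rfl⟩ := hx
        refine ⟨b * (f ⟨a, ha⟩ : Λ), ?_, ?_⟩
        · simpa using hA.mul_mem h⁻¹ 1 b hb (f ⟨a, ha⟩) (f ⟨a, ha⟩).2
        · rw [mul_assoc, ← key_l ⟨a, ha⟩]
      have h1 : (1 : Λ) ∈ A (h⁻¹ * h) := by simpa using hA.one_mem
      have := hA.strong h⁻¹ h h1
      have := (AddSubgroup.closure_le T).mpr hsub this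
      exact this
    -- right inverse
    have hright : ∃ w ∈ A h⁻¹, u * w = 1 := by
      set T : AddSubgroup Λ :=
        { carrier := {x | ∃ w ∈ A h⁻¹, u * w = x}
          zero_mem' := ⟨0, (A h⁻¹).zero_mem, by simp⟩
          add_mem' := by
            rintro a b ⟨w1, hw1, rfl⟩ ⟨w2, hw2, rfl⟩
            exact ⟨w1 + w2, (A h⁻¹).add_mem hw1 hw2, by noncomm_ring⟩
          neg_mem' := by
            rintro a ⟨w1, hw1, rfl⟩
            exact ⟨-w1, (A h⁻¹).neg_mem hw1, by noncomm_ring⟩ }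
      have hsub : ((A h : Set Λ) * (A h⁻¹ : Set Λ)) ⊆ (T : Set Λ) := by
        rintro x hx
        rw [Set.mem_mul] at hx
        obtain ⟨a, ha, b, hb, rfl⟩ := hx
        refine ⟨(f ⟨a, ha⟩ : Λ) * b, ?_, ?_⟩
        · simpa using hA.mul_mem 1 h⁻¹ (f ⟨a, ha⟩) (f ⟨a, ha⟩).2 b hb
        · rw [← mul_assoc, ← key_r ⟨a, ha⟩]
      have h1 : (1 : Λ) ∈ A (h * h⁻¹) := by simpa using hA.one_mem
      have := hA.strong h h⁻¹ h1
      have := (AddSubgroup.closure_le T).mpr hsub this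
      exact this
    obtain ⟨w, hw, hwu⟩ := hleft
    obtain ⟨w', hw', huw'⟩ := hright
    have hww' : w = w' := by
      calc w = w * (u * w') := by rw [huw', mul_one]
        _ = (w * u) * w' := by rw [mul_assoc]
        _ = w' := by rw [hwu, one_mul]
    exact ⟨u, hu, w, hw, by rw [hww']; exact huw', hwu, hc⟩

end Aux

/-- For a strongly `G`-graded ring, the set of `h ∈ G` with
`Λ_h ≅ Δ` as `Δ`-bimodules is a subgroup of `G`. -/
theorem inn_isSubgroup {G Λ : Type*} [Group G] [Ring Λ] [DecidableEq G]
    (A : G → AddSubgroup Λ) (hA : IsStrongGrading A) :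
    ∃ S : Subgroup G, (S : Set G) = {h : G | ComponentBimodIso A h 1} := by
  refine ⟨{ carrier := {h : G | InvElem A h}
            one_mem' := ⟨1, hA.one_mem, 1, by simpa using hA.one_mem, by simp, by simp,
              fun d _ => by rw [one_mul, mul_one]⟩
            mul_mem' := ?_
            inv_mem' := ?_ }, ?_⟩
  · rintro g k ⟨u1, hu1, v1, hv1, h11, h12, hc1⟩ ⟨u2, hu2, v2, hv2, h21, h22, hc2⟩
    refine ⟨u1 * u2, hA.mul_mem g k u1 hu1 u2 hu2, v2 * v1, ?_, ?_, ?_, ?_⟩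
    · have := hA.mul_mem k⁻¹ g⁻¹ v2 hv2 v1 hv1
      simpa [mul_inv_rev] using this
    · calc u1 * u2 * (v2 * v1) = u1 * (u2 * v2) * v1 := by noncomm_ring
        _ = 1 := by rw [h21, mul_one, h11]
    · calc v2 * v1 * (u1 * u2) = v2 * (v1 * u1) * u2 := by noncomm_ring
        _ = 1 := by rw [h12, mul_one, h22]
    · intro d hd
      calc u1 * u2 * d = u1 * (u2 * d) := by rw [mul_assoc]
        _ = u1 * (d * u2) := by rw [hc2 d hd]
        _ = (u1 * d) * u2 := by rw [mul_assoc]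
        _ = d * (u1 * u2) := by rw [hc1 d hd, mul_assoc]
  · rintro g ⟨u, hu, v, hv, huv, hvu, hc⟩
    exact ⟨v, hv, u, by simpa using hu, hvu, huv, invElem_comm_v (A := A) huv hvu hc⟩
  · ext h
    exact invElem_iff A hA h
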